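/- There exists η ∈ (0,1) depending only on n with the following property: for every real polynomial P of degree ≤ n and all t, θ > 0, if max_{s ∈ [0,t]} |P(s)| = |P(t)| = θ, then θ/2 < |P(s)| ≤ θ for all s ∈ [(1−η)t, t]. -/

import Mathlib

open Polynomial

/-- Coefficient bound: coefficients of a degree ≤ n polynomial are controlled by its
sup on `[0,1]`. -/
lemma stmt_19_coeff_bound (n : ℕ) : ∃ C : ℝ, 0 ≤ C ∧ ∀ Q : Polynomial ℝ, Q.natDegree ≤ n →
    (∀ x ∈ Set.Icc (0 : ℝ) 1, |Q.eval x| ≤ 1) → ∀ k, |Q.coeff k| ≤ C := by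
  set V := Polynomial.degreeLT ℝ (n + 1) with hV
  haveI : Module.Finite ℝ V :=
    Module.Finite.equiv (Polynomial.degreeLTEquiv ℝ (n + 1)).symm
  set L : V →ₗ[ℝ] C(Set.Icc (0 : ℝ) 1, ℝ) :=
    (Polynomial.toContinuousMapOnAlgHom (Set.Icc (0 : ℝ) 1)).toLinearMap ∘ₗ V.subtype with hL
  have hLapply : ∀ (q : V) (x : Set.Icc (0 : ℝ) 1), (L q) x = (q : ℝ[X]).eval (x : ℝ) := by
    intro q x; rfl
  have hinj : Function.Injective L := by
    rw [← LinearMap.ker_eq_bot]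
    apply (Submodule.eq_bot_iff _).2
    rintro ⟨p, hp⟩ hker
    have hz : ∀ x : Set.Icc (0 : ℝ) 1, p.eval (x : ℝ) = 0 := by
      intro x
      have := congrArg (fun f : C(Set.Icc (0 : ℝ) 1, ℝ) => f x) hker
      simpa [hLapply] using this
    have hp0 : p = 0 := by
      apply Polynomial.eq_zero_of_infinite_isRoot
      refine Set.Infinite.mono ?_ (Set.Icc_infinite (show (0:ℝ) < 1 by norm_num))
      intro x hx
      simpa [Polynomial.IsRoot] using hz ⟨x, hx⟩
    simp [hp0]
  set e : V ≃ₗ[ℝ] LinearMap.range L := LinearEquiv.ofInjective L hinj with he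
  set g : LinearMap.range L →ₗ[ℝ] (Fin (n + 1) → ℝ) :=
    (Polynomial.degreeLTEquiv ℝ (n + 1)).toLinearMap ∘ₗ e.symm.toLinearMap with hg
  set G := LinearMap.toContinuousLinearMap g with hG
  letI : Norm (LinearMap.range L →L[ℝ] (Fin (n + 1) → ℝ)) :=
    @ContinuousLinearMap.hasOpNorm ℝ ℝ (LinearMap.range L) (Fin (n + 1) → ℝ) _ _ _ _ (Submodule.normedSpace _) _ (RingHom.id ℝ)
  refine ⟨‖G‖, @ContinuousLinearMap.opNorm_nonneg ℝ ℝ (LinearMap.range L) (Fin (n + 1) → ℝ) _ _ _ _ (Submodule.normedSpace _) _ (RingHom.id ℝ) G, ?_⟩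
  intro Q hdeg hsup k
  have hQ : Q ∈ V := by
    rw [hV, Polynomial.mem_degreeLT]
    refine lt_of_le_of_lt Q.degree_le_natDegree ?_
    exact_mod_cast Nat.lt_succ_of_le hdeg
  set q : V := ⟨Q, hQ⟩ with hq
  have hnorm : ‖e q‖ ≤ 1 := by
    have : ‖L q‖ ≤ 1 := by
      apply ContinuousMap.norm_le _ zero_le_one |>.2
      intro x
      simpa [hLapply] using hsup x x.2
    simpa [he, LinearEquiv.ofInjective_apply] using this
  have hgeq : g (e q) = fun i : Fin (n + 1) => Q.coeff i := by
    rw [hg]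
    simp only [LinearMap.coe_comp, LinearEquiv.coe_coe, Function.comp_apply,
      LinearEquiv.symm_apply_apply]
    rfl
  by_cases hk : k ≤ n
  · have hcoeff : Q.coeff k = g (e q) ⟨k, Nat.lt_succ_of_le hk⟩ := by rw [hgeq]
    rw [hcoeff]
    calc |g (e q) ⟨k, Nat.lt_succ_of_le hk⟩| ≤ ‖g (e q)‖ := by
          simpa using norm_le_pi_norm (g (e q)) ⟨k, Nat.lt_succ_of_le hk⟩
      _ = ‖G (e q)‖ := by rw [hG]; simp
      _ ≤ ‖G‖ * ‖e q‖ := @ContinuousLinearMap.le_opNorm ℝ ℝ (LinearMap.range L) (Fin (n + 1) → ℝ) _ _ _ _ (Submodule.normedSpace _) _ (RingHom.id ℝ) _ G _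
      _ ≤ ‖G‖ * 1 := by
          exact mul_le_mul_of_nonneg_left hnorm (@ContinuousLinearMap.opNorm_nonneg ℝ ℝ (LinearMap.range L) (Fin (n + 1) → ℝ) _ _ _ _ (Submodule.normedSpace _) _ (RingHom.id ℝ) G)
      _ = ‖G‖ := mul_one _
  · have : Q.coeff k = 0 :=
      Polynomial.coeff_eq_zero_of_natDegree_lt (lt_of_le_of_lt hdeg (Nat.lt_of_not_le hk))
    rw [this, abs_zero]; exact @ContinuousLinearMap.opNorm_nonneg ℝ ℝ (LinearMap.range L) (Fin (n + 1) → ℝ) _ _ _ _ (Submodule.normedSpace _) _ (RingHom.id ℝ) G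

lemma stmt_19_one_sub_pow (x : ℝ) (hx0 : 0 ≤ x) (hx1 : x ≤ 1) (i : ℕ) :
    0 ≤ 1 - x ^ i ∧ 1 - x ^ i ≤ i * (1 - x) := by
  induction i with
  | zero => simp
  | succ i ih =>
    have hxi : 0 ≤ x ^ i := pow_nonneg hx0 i
    have hstep : x ^ (i + 1) = x * x ^ i := by ring
    constructor
    · rw [hstep]; nlinarith [ih.1]
    · rw [hstep]; push_cast; nlinarith [ih.1, ih.2]

/-- Lipschitz-type estimate near 1. -/
lemma stmt_19_lip (n : ℕ) : ∃ C : ℝ, 0 ≤ C ∧ ∀ Q : Polynomial ℝ, Q.natDegree ≤ n →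
    (∀ x ∈ Set.Icc (0 : ℝ) 1, |Q.eval x| ≤ 1) →
    ∀ x ∈ Set.Icc (0 : ℝ) 1, |Q.eval 1 - Q.eval x| ≤ C * (1 - x) := by
  obtain ⟨C0, hC0, hbound⟩ := stmt_19_coeff_bound n
  refine ⟨C0 * (n + 1) * (n + 1), by positivity, ?_⟩
  intro Q hdeg hsup x hx
  obtain ⟨hx0, hx1⟩ := hx
  have hlt : Q.natDegree < n + 1 := Nat.lt_succ_of_le hdeg
  have h1 : Q.eval 1 = ∑ i ∈ Finset.range (n + 1), Q.coeff i * 1 ^ i :=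
    Polynomial.eval_eq_sum_range' hlt 1
  have h2 : Q.eval x = ∑ i ∈ Finset.range (n + 1), Q.coeff i * x ^ i :=
    Polynomial.eval_eq_sum_range' hlt x
  have hdiff : Q.eval 1 - Q.eval x
      = ∑ i ∈ Finset.range (n + 1), Q.coeff i * (1 - x ^ i) := by
    rw [h1, h2, ← Finset.sum_sub_distrib]
    congr 1; ext i; ring
  rw [hdiff]
  calc |∑ i ∈ Finset.range (n + 1), Q.coeff i * (1 - x ^ i)|
      ≤ ∑ i ∈ Finset.range (n + 1), |Q.coeff i * (1 - x ^ i)| :=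
        Finset.abs_sum_le_sum_abs _ _
    _ ≤ ∑ _i ∈ Finset.range (n + 1), C0 * ((n + 1) * (1 - x)) := by
        apply Finset.sum_le_sum
        intro i hi
        rw [abs_mul]
        obtain ⟨hnn, hle⟩ := stmt_19_one_sub_pow x hx0 hx1 i
        have hi' : (i : ℝ) ≤ (n + 1 : ℝ) := by
          have := Finset.mem_range.1 hi
          exact_mod_cast this.le
        have habs : |1 - x ^ i| ≤ (n + 1) * (1 - x) := by
          rw [abs_of_nonneg hnn]
          calc 1 - x ^ i ≤ i * (1 - x) := hle
            _ ≤ (n + 1) * (1 - x) := by nlinarith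
        exact mul_le_mul (hbound Q hdeg hsup i) habs (abs_nonneg _)
          hC0
    _ = (n + 1) * (C0 * ((n + 1) * (1 - x))) := by
        rw [Finset.sum_const, Finset.card_range]; push_cast; ring
    _ = C0 * (n + 1) * (n + 1) * (1 - x) := by ring

theorem stmt_19 (n : ℕ) :
    ∃ η : ℝ, 0 < η ∧ η < 1 ∧
      ∀ P : Polynomial ℝ, P.natDegree ≤ n →
        ∀ t θ : ℝ, 0 < t → 0 < θ →
          (∀ s ∈ Set.Icc (0 : ℝ) t, |P.eval s| ≤ θ) →
          |P.eval t| = θ →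
          ∀ s ∈ Set.Icc ((1 - η) * t) t, θ / 2 < |P.eval s| ∧ |P.eval s| ≤ θ := by
  obtain ⟨C, hC, hlip⟩ := stmt_19_lip n
  set η : ℝ := 1 / (2 * C + 2) with hη
  have hden : (0 : ℝ) < 2 * C + 2 := by linarith
  have hηpos : 0 < η := by positivity
  have hη1 : η < 1 := by
    rw [hη, div_lt_one hden]; linarith
  have hCη : C * η < 1 / 2 := by
    rw [hη, mul_one_div, div_lt_div_iff₀ hden two_pos]; linarith
  refine ⟨η, hηpos, hη1, ?_⟩
  intro P hdegP t θ ht hθ hsup hPt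
  intro s hs
  obtain ⟨hs1, hs2⟩ := hs
  have hspos : 0 < s := lt_of_lt_of_le (by nlinarith) hs1
  have hsmem : s ∈ Set.Icc (0 : ℝ) t := ⟨hspos.le, hs2⟩
  refine ⟨?_, hsup s hsmem⟩
  -- rescale
  set Q : ℝ[X] := θ⁻¹ • (P.comp (Polynomial.C t * Polynomial.X)) with hQ
  have hQdeg : Q.natDegree ≤ n := by
    calc Q.natDegree ≤ (P.comp (Polynomial.C t * Polynomial.X)).natDegree :=
          Polynomial.natDegree_smul_le _ _
      _ = P.natDegree * (Polynomial.C t * Polynomial.X).natDegree :=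
          Polynomial.natDegree_comp
      _ ≤ P.natDegree * 1 := by
          apply Nat.mul_le_mul_left
          calc (Polynomial.C t * Polynomial.X).natDegree
              ≤ (Polynomial.C t).natDegree + Polynomial.X.natDegree :=
                Polynomial.natDegree_mul_le
            _ ≤ 1 := by simp
      _ ≤ n := by simpa using hdegP
  have hQeval : ∀ x : ℝ, Q.eval x = θ⁻¹ * P.eval (t * x) := by
    intro x; simp [hQ, Polynomial.eval_comp, smul_eq_mul]
  have hQsup : ∀ x ∈ Set.Icc (0 : ℝ) 1, |Q.eval x| ≤ 1 := by
    intro x hx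
    obtain ⟨hx0, hx1⟩ := hx
    rw [hQeval, abs_mul, abs_of_nonneg (inv_nonneg.2 hθ.le)]
    have : |P.eval (t * x)| ≤ θ := by
      apply hsup
      constructor
      · positivity
      · exact mul_le_of_le_one_right ht.le hx1
    calc θ⁻¹ * |P.eval (t * x)| ≤ θ⁻¹ * θ :=
          mul_le_mul_of_nonneg_left this (inv_nonneg.2 hθ.le)
      _ = 1 := inv_mul_cancel₀ hθ.ne'
  set x : ℝ := s / t with hx
  have hx0 : 0 ≤ x := by positivity
  have hx1 : x ≤ 1 := by rw [hx, div_le_one ht]; exact hs2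
  have hxge : 1 - η ≤ x := by
    rw [hx, le_div_iff₀ ht]; linarith
  have hQx : Q.eval x = θ⁻¹ * P.eval s := by
    rw [hQeval, hx, mul_div_cancel₀ _ ht.ne']
  have hQ1 : |Q.eval 1| = 1 := by
    rw [hQeval, mul_one, abs_mul, abs_of_nonneg (inv_nonneg.2 hθ.le), hPt]
    exact inv_mul_cancel₀ hθ.ne'
  have hest : |Q.eval 1 - Q.eval x| ≤ C * (1 - x) := hlip Q hQdeg hQsup x ⟨hx0, hx1⟩
  have hC1x : C * (1 - x) ≤ C * η := by
    apply mul_le_mul_of_nonneg_left _ hC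
    linarith
  have hlow : 1 / 2 < |Q.eval x| := by
    have h1 : |Q.eval 1| - |Q.eval x| ≤ |Q.eval 1 - Q.eval x| := abs_sub_abs_le_abs_sub _ _
    rw [hQ1] at h1
    linarith [lt_of_le_of_lt (le_trans hest hC1x) hCη]
  have : |Q.eval x| = θ⁻¹ * |P.eval s| := by
    rw [hQx, abs_mul, abs_of_nonneg (inv_nonneg.2 hθ.le)]
  rw [this] at hlow
  -- from hlow : 1/2 < θ⁻¹ * |P.eval s|
  rw [inv_mul_eq_div, lt_div_iff₀ hθ] at hlow
  rw [div_lt_iff₀' two_pos]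
  nlinarith [hlow, hθ, abs_nonneg (P.eval s)]
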